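/- Consider the discrete-time system x⁺ = F(d,x) on a closed set S ⊆ ℝⁿ with equilibrium x* (F(d,x*) = x* for all d ∈ D, D compact). Suppose A ⊆ S is a trapping region with transient bound m, there exist functions V_i : S → ℝ≥0 (i = 1,…,l), a nonnegative matrix Γ ∈ ℝ_{≥0}^{l×l} with spectral radius ρ(Γ) < 1, and constants K₂ ≥ K₁ > 0, p > 0, such that K₁|x−x*|^p ≤ max_i V_i(x) ≤ K₂|x−x*|^p for all x ∈ A, and V_i(F(d,x)) ≤ Σ_j γ_{i,j} V_j(x) for all x ∈ A, d ∈ D, i. Suppose moreover there is L ≥ 0 with |F(d,x)−x*| ≤ L|x−x*| for all x ∈ S and d ∈ D. Then x* is robustly globally exponentially stable: there exist constants M̃, σ̃ > 0 such that every solution satisfies |x(t)−x*| ≤ M̃ exp(−σ̃ t)|x(0)−x*| for all t ∈ ℕ. -/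

import Mathlib

open scoped Matrix

attribute [local instance] Matrix.linftyOpNormedRing Matrix.linftyOpNormedAlgebra

lemma aux_spectrum_isRoot {N : ℕ} (B : Matrix (Fin N) (Fin N) ℂ) (μ : ℂ)
    (h : μ ∈ spectrum ℂ B) : B.charpoly.IsRoot μ := by
  rw [spectrum.mem_iff] at h
  have hdet : ((Matrix.scalar (Fin N)) μ - B).det = 0 := by
    by_contra hd
    exact h ((Matrix.isUnit_iff_isUnit_det _).2 (isUnit_iff_ne_zero.2 hd))
  rw [Polynomial.IsRoot, Matrix.charpoly, eval_det, Matrix.matPolyEquiv_charmatrix]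
  simpa using hdet

lemma aux_entry_le_norm {N : ℕ} (B : Matrix (Fin N) (Fin N) ℂ) (i j : Fin N) :
    ‖B i j‖ ≤ ‖B‖ := by
  have h1 : ‖B i j‖₊ ≤ ∑ j', ‖B i j'‖₊ :=
    Finset.single_le_sum (f := fun j' => ‖B i j'‖₊) (fun _ _ => zero_le) (Finset.mem_univ j)
  have h2 : (∑ j', ‖B i j'‖₊) ≤ ‖B‖₊ := by
    rw [Matrix.linfty_opNNNorm_def]
    exact Finset.le_sup (f := fun i' => ∑ j', ‖B i' j'‖₊) (Finset.mem_univ i)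
  have h3 : (‖B i j‖₊ : ℝ) ≤ (‖B‖₊ : ℝ) := NNReal.coe_le_coe.2 (h1.trans h2)
  simpa using h3

lemma aux_geom {N : ℕ} (hN : 0 < N) (B : Matrix (Fin N) (Fin N) ℂ)
    (h : ∀ μ : ℂ, B.charpoly.IsRoot μ → ‖μ‖ < 1) :
    ∃ C r : ℝ, 0 < C ∧ 0 < r ∧ r < 1 ∧ ∀ k (i j : Fin N), ‖(B ^ k) i j‖ ≤ C * r ^ k := by
  haveI : Nonempty (Fin N) := ⟨⟨0, hN⟩⟩
  haveI : Nontrivial (Matrix (Fin N) (Fin N) ℂ) := by infer_instance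
  haveI : CompleteSpace (Matrix (Fin N) (Fin N) ℂ) := FiniteDimensional.complete ℂ _
  have hsp : spectralRadius ℂ B < 1 := by
    have := spectrum.spectralRadius_lt_of_forall_lt (a := B) (r := 1)
      (fun z hz => by
        have := h z (aux_spectrum_isRoot B z hz)
        exact_mod_cast this)
    simpa using this
  obtain ⟨c, hc1, hc2⟩ := exists_between hsp
  have hgel := spectrum.pow_nnnorm_pow_one_div_tendsto_nhds_spectralRadius B
  have hev : ∀ᶠ k : ℕ in Filter.atTop, (‖B ^ k‖₊ : ENNReal) ^ (1 / (k : ℝ)) < c :=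
    hgel.eventually_lt_const hc1
  obtain ⟨N₀, hN₀⟩ := Filter.eventually_atTop.1 hev
  set K := max N₀ 1 with hK
  have hctop : c ≠ ⊤ := (hc2.trans (by norm_num)).ne
  set r0 : NNReal := c.toNNReal with hr0
  have hr0c : (r0 : ENNReal) = c := ENNReal.coe_toNNReal hctop
  have hr01 : (r0 : ℝ) < 1 := by
    have : (r0 : ENNReal) < 1 := hr0c ▸ hc2
    exact_mod_cast this
  set r : ℝ := max (r0 : ℝ) (1 / 2) with hr
  have hrpos : 0 < r := lt_of_lt_of_le (by norm_num) (le_max_right _ _)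
  have hr1 : r < 1 := max_lt hr01 (by norm_num)
  have hbig : ∀ k, K ≤ k → ‖B ^ k‖ ≤ r ^ k := by
    intro k hk
    have hk1 : 1 ≤ k := le_trans (le_max_right _ _) hk
    have hkR : (k : ℝ) ≠ 0 := Nat.cast_ne_zero.2 (by omega)
    have hlt : (‖B ^ k‖₊ : ENNReal) ^ (1 / (k : ℝ)) < c := hN₀ k (le_trans (le_max_left _ _) hk)
    have heq : (‖B ^ k‖₊ : ENNReal) = ((‖B ^ k‖₊ : ENNReal) ^ (1 / (k : ℝ))) ^ (k : ℝ) := by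
      rw [← ENNReal.rpow_mul, one_div, inv_mul_cancel₀ hkR, ENNReal.rpow_one]
    have hlt2 : (‖B ^ k‖₊ : ENNReal) < c ^ (k : ℝ) := by
      rw [heq]
      exact ENNReal.rpow_lt_rpow hlt (by positivity)
    rw [ENNReal.rpow_natCast, ← hr0c, ← ENNReal.coe_pow] at hlt2
    have hnn : ‖B ^ k‖₊ < r0 ^ k := by exact_mod_cast hlt2
    have hreal : ‖B ^ k‖ ≤ (r0 : ℝ) ^ k := by
      have h2 : (‖B ^ k‖₊ : ℝ) ≤ ((r0 ^ k : NNReal) : ℝ) := NNReal.coe_le_coe.2 hnn.le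
      rw [NNReal.coe_pow] at h2
      exact h2
    exact hreal.trans (pow_le_pow_left₀ (by positivity) (le_max_left _ _) k)
  refine ⟨1 + ∑ k ∈ Finset.range K, ‖B ^ k‖ / r ^ k, r, by positivity, hrpos, hr1, ?_⟩
  intro k i j
  refine (aux_entry_le_norm _ i j).trans ?_
  rcases lt_or_ge k K with hk | hk
  · have h1 : ‖B ^ k‖ / r ^ k ≤ ∑ k' ∈ Finset.range K, ‖B ^ k'‖ / r ^ k' :=
      Finset.single_le_sum (f := fun k' => ‖B ^ k'‖ / r ^ k') (fun _ _ => by positivity)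
        (Finset.mem_range.2 hk)
    have h2 : ‖B ^ k‖ = (‖B ^ k‖ / r ^ k) * r ^ k := by field_simp
    rw [h2]
    have := mul_le_mul_of_nonneg_right h1 (le_of_lt (pow_pos hrpos k))
    refine this.trans (mul_le_mul_of_nonneg_right ?_ (le_of_lt (pow_pos hrpos k)))
    linarith
  · refine (hbig k hk).trans ?_
    nlinarith [pow_pos hrpos k, Finset.sum_nonneg (fun k' (_ : k' ∈ Finset.range K) =>
      div_nonneg (norm_nonneg (B ^ k')) (le_of_lt (pow_pos hrpos k')))]

theorem stmt_6 {n l lV : ℕ}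
    (S : Set (EuclideanSpace ℝ (Fin n))) (hSclosed : IsClosed S) (hSne : S.Nonempty)
    (xstar : EuclideanSpace ℝ (Fin n)) (hxstarS : xstar ∈ S)
    (D : Set (EuclideanSpace ℝ (Fin l))) (hDcomp : IsCompact D) (hDne : D.Nonempty)
    (F : EuclideanSpace ℝ (Fin l) → EuclideanSpace ℝ (Fin n) → EuclideanSpace ℝ (Fin n))
    (hFS : ∀ d ∈ D, ∀ x ∈ S, F d x ∈ S)
    (hFeq : ∀ d ∈ D, F d xstar = xstar)
    (A : Set (EuclideanSpace ℝ (Fin n))) (hAS : A ⊆ S)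
    (m : ℕ)
    (htrap : ∀ (x : ℕ → EuclideanSpace ℝ (Fin n)) (d : ℕ → EuclideanSpace ℝ (Fin l)),
        x 0 ∈ S → (∀ t, d t ∈ D) → (∀ t, x (t + 1) = F (d t) (x t)) →
        ∀ t, m ≤ t → x t ∈ A)
    (V : Fin lV → EuclideanSpace ℝ (Fin n) → ℝ)
    (hVnonneg : ∀ i x, 0 ≤ V i x)
    (Γ : Matrix (Fin lV) (Fin lV) ℝ)
    (hΓ : ∀ i j, 0 ≤ Γ i j)
    (hρ : ∀ μ : ℂ, ((Γ.map Complex.ofReal).charpoly).IsRoot μ → ‖μ‖ < 1)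
    (K₁ K₂ p L : ℝ) (hK₁ : 0 < K₁) (hK : K₁ ≤ K₂) (hp : 0 < p) (hL : 0 ≤ L)
    (hlow : ∀ x ∈ A, ∃ i, K₁ * ‖x - xstar‖ ^ p ≤ V i x)
    (hup : ∀ x ∈ A, ∀ i, V i x ≤ K₂ * ‖x - xstar‖ ^ p)
    (hdec : ∀ d ∈ D, ∀ x ∈ A, ∀ i, V i (F d x) ≤ ∑ j, Γ i j * V j x)
    (hLip : ∀ d ∈ D, ∀ x ∈ S, ‖F d x - xstar‖ ≤ L * ‖x - xstar‖) :
    ∃ M σ : ℝ, 0 < M ∧ 0 < σ ∧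
      ∀ (x : ℕ → EuclideanSpace ℝ (Fin n)) (d : ℕ → EuclideanSpace ℝ (Fin l)),
        x 0 ∈ S → (∀ t, d t ∈ D) → (∀ t, x (t + 1) = F (d t) (x t)) →
        ∀ t : ℕ, ‖x t - xstar‖ ≤ M * Real.exp (-σ * t) * ‖x 0 - xstar‖ := by
  by_cases hlV : lV = 0
  · subst hlV
    refine ⟨1, 1, one_pos, one_pos, ?_⟩
    intro x d hx0 hd hstep t
    exfalso
    obtain ⟨i, -⟩ := hlow (x m) (htrap x d hx0 hd hstep m le_rfl)
    exact i.elim0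
  have hNpos : 0 < lV := Nat.pos_of_ne_zero hlV
  have hlVR : (0 : ℝ) < lV := by exact_mod_cast hNpos
  obtain ⟨C, r, hC, hr0, hr1, hCr⟩ := aux_geom hNpos (Γ.map Complex.ofReal) hρ
  -- entrywise bound on powers of Γ
  have hmap : ∀ k : ℕ, (Γ ^ k).map Complex.ofReal = (Γ.map Complex.ofReal) ^ k := by
    intro k
    have h := map_pow Complex.ofRealHom.mapMatrix Γ k
    exact h
  have hΓpow : ∀ (k : ℕ) (i j : Fin lV), (Γ ^ k) i j ≤ C * r ^ k := by
    intro k i j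
    refine (le_abs_self _).trans ?_
    have h := hCr k i j
    rw [← hmap k] at h
    simpa [Matrix.map_apply, Complex.norm_real] using h
  -- constants
  set Q : ℝ := (lV : ℝ) * C * K₂ / K₁ with hQdef
  have hQ0 : 0 < Q := div_pos (mul_pos (mul_pos hlVR hC) (lt_of_lt_of_le hK₁ hK)) hK₁
  set C₁ : ℝ := Q ^ p⁻¹ with hC₁def
  have hC₁ : 0 < C₁ := Real.rpow_pos_of_pos hQ0 _
  set rp : ℝ := r ^ p⁻¹ with hrpdef
  have hrp0 : 0 < rp := Real.rpow_pos_of_pos hr0 _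
  have hrp1 : rp < 1 := Real.rpow_lt_one hr0.le hr1 (by positivity)
  set maxL : ℝ := max L 1 with hmaxLdef
  have hmaxL1 : (1 : ℝ) ≤ maxL := le_max_right _ _
  have hmaxL0 : (0 : ℝ) ≤ maxL := le_trans zero_le_one hmaxL1
  refine ⟨(C₁ + 1) * maxL ^ m * (rp ^ m)⁻¹, -Real.log rp, by positivity,
    by simpa using neg_pos.mpr (Real.log_neg hrp0 hrp1), ?_⟩
  intro x d hx0 hd hstep t
  -- exp(-σ t) = rp ^ t
  have hexp : Real.exp (-(-Real.log rp) * t) = rp ^ t := by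
    rw [neg_neg, ← Real.rpow_natCast rp t, Real.rpow_def_of_pos hrp0]
  rw [hexp]
  set b0 : ℝ := ‖x 0 - xstar‖ with hb0
  have hb0nn : 0 ≤ b0 := norm_nonneg _
  -- trajectory stays in S
  have hxS : ∀ t, x t ∈ S := by
    intro t
    induction t with
    | zero => exact hx0
    | succ t ih => rw [hstep t]; exact hFS _ (hd t) _ ih
  -- Lipschitz growth bound
  have hLpow : ∀ t, ‖x t - xstar‖ ≤ L ^ t * b0 := by
    intro t
    induction t with
    | zero => simp [hb0]
    | succ t ih =>
      rw [hstep t]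
      calc ‖F (d t) (x t) - xstar‖ ≤ L * ‖x t - xstar‖ := hLip _ (hd t) _ (hxS t)
        _ ≤ L * (L ^ t * b0) := mul_le_mul_of_nonneg_left ih hL
        _ = L ^ (t + 1) * b0 := by rw [pow_succ]; ring
  have hA : ∀ t, m ≤ t → x t ∈ A := htrap x d hx0 hd hstep
  -- Lyapunov decay along the trajectory
  have hVdec : ∀ (s : ℕ) (i : Fin lV), V i (x (m + s)) ≤ ∑ j, (Γ ^ s) i j * V j (x m) := by
    intro s
    induction s with
    | zero => intro i; simp [Matrix.one_apply]
    | succ s ih =>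
      intro i
      have hxA : x (m + s) ∈ A := hA _ (Nat.le_add_right m s)
      have h1 : V i (x (m + (s + 1))) ≤ ∑ j, Γ i j * V j (x (m + s)) := by
        have : m + (s + 1) = (m + s) + 1 := rfl
        rw [this, hstep (m + s)]
        exact hdec _ (hd _) _ hxA i
      have h2 : ∑ j, Γ i j * V j (x (m + s)) ≤
          ∑ j, Γ i j * (∑ k, (Γ ^ s) j k * V k (x m)) :=
        Finset.sum_le_sum fun j _ => mul_le_mul_of_nonneg_left (ih j) (hΓ i j)
      have h3 : ∑ j, Γ i j * (∑ k, (Γ ^ s) j k * V k (x m)) =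
          ∑ k, (Γ ^ (s + 1)) i k * V k (x m) := by
        simp_rw [Finset.mul_sum]
        rw [Finset.sum_comm]
        refine Finset.sum_congr rfl fun k _ => ?_
        rw [pow_succ', Matrix.mul_apply, Finset.sum_mul]
        exact Finset.sum_congr rfl fun j _ => by ring
      exact h1.trans (h2.trans_eq h3)
  -- key bound
  have key : ‖x t - xstar‖ ≤ (C₁ + 1) * maxL ^ m * (rp ^ m)⁻¹ * rp ^ t * b0 := by
    rcases le_or_gt m t with hmt | hmt
    · -- t ≥ m
      set s := t - m with hs
      have hts : t = m + s := by omega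
      set a : ℝ := ‖x t - xstar‖ with ha
      set b : ℝ := ‖x m - xstar‖ with hb
      have hann : 0 ≤ a := norm_nonneg _
      have hbnn : 0 ≤ b := norm_nonneg _
      obtain ⟨i, hi⟩ := hlow (x t) (hA t hmt)
      have hxmA : x m ∈ A := hA m le_rfl
      have hsum : V i (x t) ≤ ∑ j, (Γ ^ s) i j * V j (x m) := by
        rw [hts]; exact hVdec s i
      have hsum2 : ∑ j, (Γ ^ s) i j * V j (x m) ≤ (lV : ℝ) * (C * r ^ s * (K₂ * b ^ p)) := by
        calc ∑ j, (Γ ^ s) i j * V j (x m)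
            ≤ ∑ _j : Fin lV, C * r ^ s * (K₂ * b ^ p) :=
              Finset.sum_le_sum fun j _ => mul_le_mul (hΓpow s i j) (hup _ hxmA j)
                (hVnonneg j _) (by positivity)
          _ = (lV : ℝ) * (C * r ^ s * (K₂ * b ^ p)) := by
              rw [Finset.sum_const, Finset.card_univ, Fintype.card_fin, nsmul_eq_mul]
      have h4 : a ^ p ≤ Q * r ^ s * b ^ p := by
        have h5 : K₁ * a ^ p ≤ (lV : ℝ) * (C * r ^ s * (K₂ * b ^ p)) :=
          le_trans hi (hsum.trans hsum2)
        have h6 : Q * r ^ s * b ^ p = ((lV : ℝ) * (C * r ^ s * (K₂ * b ^ p))) / K₁ := by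
          rw [hQdef]; field_simp
        rw [h6, le_div_iff₀ hK₁]
        linarith [h5]
      have h7 : a ≤ (Q * r ^ s * b ^ p) ^ p⁻¹ := by
        have := Real.rpow_le_rpow (Real.rpow_nonneg hann p) h4 (inv_nonneg.2 hp.le)
        rwa [Real.rpow_rpow_inv hann hp.ne'] at this
      have h8 : (Q * r ^ s * b ^ p) ^ p⁻¹ = C₁ * rp ^ s * b := by
        rw [Real.mul_rpow (by positivity) (Real.rpow_nonneg hbnn p),
          Real.mul_rpow hQ0.le (by positivity),
          Real.rpow_rpow_inv hbnn hp.ne']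
        congr 1
        congr 1
        rw [← Real.rpow_natCast r s, ← Real.rpow_mul hr0.le, mul_comm,
          Real.rpow_mul hr0.le, Real.rpow_natCast]
      have h9 : a ≤ C₁ * rp ^ s * b := h8 ▸ h7
      have h10 : b ≤ maxL ^ m * b0 := by
        refine (hLpow m).trans ?_
        exact mul_le_mul_of_nonneg_right (pow_le_pow_left₀ hL (le_max_left _ _) m) hb0nn
      have h11 : a ≤ C₁ * rp ^ s * (maxL ^ m * b0) := by
        refine h9.trans ?_
        exact mul_le_mul_of_nonneg_left h10 (by positivity)
      have h12 : (C₁ + 1) * maxL ^ m * (rp ^ m)⁻¹ * rp ^ t * b0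
          = (C₁ + 1) * rp ^ s * (maxL ^ m * b0) := by
        rw [hts, pow_add]
        field_simp
      rw [h12]
      refine h11.trans ?_
      have : C₁ * rp ^ s ≤ (C₁ + 1) * rp ^ s := by nlinarith [pow_pos hrp0 s]
      exact mul_le_mul_of_nonneg_right this (by positivity)
    · -- t < m
      have h1 : ‖x t - xstar‖ ≤ maxL ^ m * b0 := by
        refine (hLpow t).trans ?_
        have h2 : L ^ t ≤ maxL ^ t := pow_le_pow_left₀ hL (le_max_left _ _) t
        have h3 : maxL ^ t ≤ maxL ^ m := pow_le_pow_right₀ hmaxL1 hmt.le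
        exact mul_le_mul_of_nonneg_right (h2.trans h3) hb0nn
      refine h1.trans ?_
      have hge : rp ^ m ≤ rp ^ t := pow_le_pow_of_le_one hrp0.le hrp1.le hmt.le
      have hinv : (1 : ℝ) ≤ (rp ^ m)⁻¹ * rp ^ t := by
        rw [← inv_mul_cancel₀ (pow_ne_zero m hrp0.ne')]
        exact mul_le_mul_of_nonneg_left hge (by positivity)
      nlinarith [pow_pos hrp0 t, pow_pos hrp0 m, mul_nonneg (pow_nonneg hmaxL0 m) hb0nn,
        mul_le_mul_of_nonneg_left hinv (mul_nonneg (pow_nonneg hmaxL0 m) hb0nn)]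
  calc ‖x t - xstar‖ ≤ (C₁ + 1) * maxL ^ m * (rp ^ m)⁻¹ * rp ^ t * b0 := key
    _ = (C₁ + 1) * maxL ^ m * (rp ^ m)⁻¹ * rp ^ t * ‖x 0 - xstar‖ := rfl
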